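/- For $a > 1$, $n \geq 1$, $0 \leq \alpha \leq \beta$, and $x \geq 0$ large enough that $r^*_{n,a}(x;\alpha,\beta) \geq 0$, the first moment of the Kantorovich operator is $K_{n,a}^{\alpha,\beta}(t; x) = \frac{-(1+\frac{1}{a-1}) + \sqrt{(4+2\alpha+\frac{1}{a-1})^2 + 4((n+\beta)^2 x^2 - \frac{10}{3} - 3\alpha - \alpha^2)}}{2(n+\beta)}$. -/

import Mathlib

/-- Charlier polynomial `C_k^{(a)}(u) = ∑_{r=0}^k (k choose r) (-u)_r (1/a)^r`. -/
noncomputable def charlier (a u : ℝ) (k : ℕ) : ℝ :=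
  ∑ r ∈ Finset.range (k + 1),
    (k.choose r : ℝ) * (ascPochhammer ℝ r).eval (-u) * (1 / a) ^ r

/-- The radicand appearing in the definition of `rstar`. -/
noncomputable def radicand (a α β x : ℝ) (n : ℕ) : ℝ :=
  (4 + 2 * α + 1 / (a - 1)) ^ 2 + 4 * (((n : ℝ) + β) ^ 2 * x ^ 2 - 10 / 3 - 3 * α - α ^ 2)

/-- The function `r*_{n,a}(x; α, β)`. -/
noncomputable def rstar (a α β x : ℝ) (n : ℕ) : ℝ :=
  (-(4 + 2 * α + 1 / (a - 1)) + Real.sqrt (radicand a α β x n)) / (2 * n)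

/-- The Kantorovich-Charlier operator `K_{n,a}^{α,β}(f; x)`. -/
noncomputable def K (a α β : ℝ) (n : ℕ) (f : ℝ → ℝ) (x : ℝ) : ℝ :=
  ((n : ℝ) + β) * Real.exp (-1) * (1 - 1 / a) ^ ((a - 1) * n * rstar a α β x n) *
    ∑' k : ℕ, charlier a (-(a - 1) * n * rstar a α β x n) k / (Nat.factorial k : ℝ) *
      ∫ s in ((k + α) / ((n : ℝ) + β))..((k + α + 1) / ((n : ℝ) + β)), f s


open Polynomial Finset Real Filter intervalIntegral

noncomputable def pochTerm (v t : ℝ) (r : ℕ) : ℝ :=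
  (ascPochhammer ℝ r).eval v * t ^ r / r.factorial

lemma asc_nonneg {v : ℝ} (hv : 0 ≤ v) (r : ℕ) : 0 ≤ (ascPochhammer ℝ r).eval v := by
  induction r with
  | zero => simp
  | succ r ih =>
      rw [ascPochhammer_succ_eval]
      exact mul_nonneg ih (by positivity)

lemma pochTerm_nonneg {v t : ℝ} (hv : 0 ≤ v) (ht : 0 ≤ t) (r : ℕ) : 0 ≤ pochTerm v t r := by
  unfold pochTerm
  have := asc_nonneg hv r
  positivity

lemma pochTerm_succ (v t : ℝ) (r : ℕ) :
    pochTerm v t (r + 1) = (v + r) * t / (r + 1) * pochTerm v t r := by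
  unfold pochTerm
  have h1 : (r.factorial : ℝ) ≠ 0 := Nat.cast_ne_zero.mpr r.factorial_ne_zero
  have h2 : ((r:ℝ) + 1) ≠ 0 := by positivity
  rw [ascPochhammer_succ_eval, pow_succ, Nat.factorial_succ]
  push_cast
  field_simp

lemma summable_pochTerm {v t : ℝ} (hv : 0 ≤ v) (ht0 : 0 ≤ t) (ht1 : t < 1) :
    Summable (pochTerm v t) := by
  apply summable_of_ratio_norm_eventually_le (r := (1 + t) / 2) (by linarith)
  filter_upwards [Filter.eventually_ge_atTop ⌈2 * v / (1 - t)⌉₊] with r hr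
  have hrc : (⌈2 * v / (1 - t)⌉₊ : ℝ) ≤ r := Nat.cast_le.mpr hr
  have h2 : 2 * v / (1 - t) ≤ r := le_trans (Nat.le_ceil _) hrc
  have h3 : 2 * v ≤ r * (1 - t) := by
    rw [div_le_iff₀ (by linarith)] at h2; linarith
  rw [Real.norm_of_nonneg (pochTerm_nonneg hv ht0 _),
    Real.norm_of_nonneg (pochTerm_nonneg hv ht0 _), pochTerm_succ]
  apply mul_le_mul_of_nonneg_right _ (pochTerm_nonneg hv ht0 r)
  rw [div_le_iff₀ (by positivity)]
  nlinarith [mul_le_mul_of_nonneg_right h3 ht0,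
    mul_nonneg (mul_nonneg (Nat.cast_nonneg (α := ℝ) r) (by linarith : (0:ℝ) ≤ 1 - t))
      (by linarith : (0:ℝ) ≤ 1 - t)]

lemma summable_deriv_bound {v c : ℝ} (hv : 0 ≤ v) (hc0 : 0 < c) (hc1 : c < 1) :
    Summable (fun r : ℕ => (r : ℝ) * pochTerm v c r / c) := by
  apply summable_of_ratio_norm_eventually_le (r := (1 + c) / 2) (by linarith)
  filter_upwards [Filter.eventually_ge_atTop (⌈2 * v * c / (1 - c)⌉₊ + 1)] with r hr
  have hrc : (⌈2 * v * c / (1 - c)⌉₊ + 1 : ℝ) ≤ r := by exact_mod_cast Nat.cast_le.mpr hr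
  have h2 : 2 * v * c / (1 - c) ≤ r := le_trans (Nat.le_ceil _) (by linarith)
  have h3 : 2 * v * c ≤ r * (1 - c) := by
    rw [div_le_iff₀ (by linarith)] at h2; linarith
  have hP := pochTerm_nonneg hv hc0.le (v := v) (t := c) r
  have key : ((r:ℝ) + 1) * pochTerm v c (r + 1) / c = (v + r) * pochTerm v c r := by
    rw [pochTerm_succ]; field_simp
  have hP1 := pochTerm_nonneg hv hc0.le (v := v) (t := c) (r + 1)
  rw [Real.norm_of_nonneg (by positivity), Real.norm_of_nonneg (by positivity)]
  push_cast
  rw [key, mul_comm ((1 + c) / 2), div_mul_eq_mul_div, le_div_iff₀ hc0]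
  nlinarith [mul_le_mul_of_nonneg_right h3 hP]

/-- The binomial series: `∑ (v)_r t^r / r! = (1-t)^(-v)` for `v ≥ 0`, `0 ≤ t < 1`. -/
lemma hasSum_pochTerm {v t : ℝ} (hv : 0 ≤ v) (ht0 : 0 ≤ t) (ht1 : t < 1) :
    HasSum (pochTerm v t) ((1 - t) ^ (-v) : ℝ) := by
  set c : ℝ := (1 + t) / 2 with hc
  have hc0 : 0 < c := by rw [hc]; linarith
  have hc1 : c < 1 := by rw [hc]; linarith
  have htc : t < c := by rw [hc]; linarith
  set s : Set ℝ := Set.Ioo (-c) c with hs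
  set f : ℕ → ℝ → ℝ := fun r y => (ascPochhammer ℝ r).eval v * y ^ r / r.factorial with hf
  set f' : ℕ → ℝ → ℝ := fun r y => (ascPochhammer ℝ r).eval v * ((r : ℝ) * y ^ (r - 1)) / r.factorial with hf'
  set u : ℕ → ℝ := fun r => (r : ℝ) * pochTerm v c r / c with hu
  have hderiv : ∀ r y, y ∈ s → HasDerivAt (f r) (f' r y) y := by
    intro r y _
    simpa [hf, hf', mul_div_assoc, mul_comm, mul_left_comm] using
      (((hasDerivAt_pow r y).const_mul ((ascPochhammer ℝ r).eval v)).div_const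
        (r.factorial : ℝ))
  have hbound : ∀ r y, y ∈ s → ‖f' r y‖ ≤ u r := by
    intro r y hy
    have hyc : |y| ≤ c := by
      rw [abs_le]; exact ⟨hy.1.le, hy.2.le⟩
    have hasc := asc_nonneg hv r
    have : ‖f' r y‖ = (ascPochhammer ℝ r).eval v * ((r : ℝ) * |y| ^ (r - 1)) / r.factorial := by
      simp [hf', abs_mul, abs_div, abs_pow, abs_of_nonneg hasc, Real.norm_eq_abs,
        abs_of_nonneg (Nat.cast_nonneg (α := ℝ) r.factorial), abs_of_nonneg (Nat.cast_nonneg (α := ℝ) r)]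
    rw [this]
    have hpow : |y| ^ (r - 1) ≤ c ^ (r - 1) := pow_le_pow_left₀ (abs_nonneg y) hyc _
    have hle : (ascPochhammer ℝ r).eval v * ((r : ℝ) * |y| ^ (r - 1)) / r.factorial ≤
        (ascPochhammer ℝ r).eval v * ((r : ℝ) * c ^ (r - 1)) / r.factorial := by
      have hfp : (0:ℝ) < r.factorial := by exact_mod_cast r.factorial_pos
      exact (div_le_div_iff_of_pos_right hfp).mpr
        (mul_le_mul_of_nonneg_left
          (mul_le_mul_of_nonneg_left hpow (Nat.cast_nonneg r)) hasc)
    refine hle.trans ?_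
    rw [hu]
    cases r with
    | zero => simp
    | succ r =>
        simp only [pochTerm, Nat.add_sub_cancel]
        have h1 : ((r+1).factorial : ℝ) ≠ 0 := Nat.cast_ne_zero.mpr (r+1).factorial_ne_zero
        apply le_of_eq
        rw [pow_succ]
        push_cast
        field_simp
  have hsum0 : Summable (fun r => f r 0) := by
    apply summable_of_ne_finset_zero (s := {0})
    intro r hr
    have hr0 : r ≠ 0 := by simpa using hr
    simp [hf, zero_pow hr0]
  have husum : Summable u := summable_deriv_bound hv hc0 hc1
  have h0s : (0:ℝ) ∈ s := ⟨by linarith, hc0⟩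
  have hG : ∀ y ∈ s, HasDerivAt (fun z => ∑' r, f r z) (∑' r, f' r y) y := fun y hy =>
    hasDerivAt_tsum_of_isPreconnected husum isOpen_Ioo isPreconnected_Ioo hderiv hbound
      h0s hsum0 hy
  set G : ℝ → ℝ := fun z => ∑' r, f r z with hGdef
  set D : ℝ → ℝ := fun y => ∑' r, f' r y with hDdef
  have hsumf : ∀ y ∈ s, Summable (fun r => f r y) := by
    intro y hy
    apply Summable.of_norm_bounded (summable_pochTerm (v := v) (t := c) hv hc0.le hc1)
    intro r
    have hyc : |y| ≤ c := by rw [abs_le]; exact ⟨hy.1.le, hy.2.le⟩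
    have hasc := asc_nonneg hv r
    have h1 : ‖f r y‖ = (ascPochhammer ℝ r).eval v * |y| ^ r / r.factorial := by
      simp [hf, Real.norm_eq_abs, abs_mul, abs_div, abs_pow, abs_of_nonneg hasc,
        abs_of_nonneg (Nat.cast_nonneg (α := ℝ) r.factorial)]
    rw [h1]
    unfold pochTerm
    have hfp : (0:ℝ) < r.factorial := by exact_mod_cast r.factorial_pos
    exact (div_le_div_iff_of_pos_right hfp).mpr
      (mul_le_mul_of_nonneg_left (pow_le_pow_left₀ (abs_nonneg y) hyc r) hasc)
  have hsumf' : ∀ y ∈ s, Summable (fun r => f' r y) := fun y hy =>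
    Summable.of_norm_bounded husum (fun r => hbound r y hy)
  have hODE : ∀ y ∈ s, (1 - y) * D y = v * G y := by
    intro y hy
    have hf'y := (hsumf' y hy).hasSum
    have hfy := (hsumf y hy).hasSum
    have hsh : HasSum (fun r => f' (r + 1) y) (D y - ∑ i ∈ Finset.range 1, f' i y) :=
      (hasSum_nat_add_iff' 1).2 hf'y
    have hsh0 : HasSum (fun r => f' (r + 1) y) (D y) := by
      simpa [hf'] using hsh
    have hterm : ∀ r : ℕ, f' (r + 1) y = v * f r y + y * f' r y := by
      intro r
      simp only [hf, hf', Nat.add_sub_cancel]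
      rw [ascPochhammer_succ_eval, Nat.factorial_succ]
      cases r with
      | zero => norm_num
      | succ m =>
          simp only [Nat.add_sub_cancel]
          have h1 : ((m + 1).factorial : ℝ) ≠ 0 := Nat.cast_ne_zero.mpr (m + 1).factorial_ne_zero
          push_cast
          field_simp
          ring
    have hrhs : HasSum (fun r => v * f r y + y * f' r y) (v * G y + y * D y) :=
      (hfy.mul_left v).add (hf'y.mul_left y)
    have heq : D y = v * G y + y * D y := by
      refine hsh0.unique ?_
      simpa only [← hterm] using hrhs
    linear_combination heq
  have hIcc : ∀ y ∈ Set.Icc (0:ℝ) t, y ∈ s := fun y hy =>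
    ⟨by linarith [hy.1], lt_of_le_of_lt hy.2 htc⟩
  set H : ℝ → ℝ := fun y => G y * (1 - y) ^ v with hHdef
  have hHderiv : ∀ y ∈ Set.Icc (0:ℝ) t, HasDerivAt H 0 y := by
    intro y hy
    have hys := hIcc y hy
    have h1y : (0:ℝ) < 1 - y := by
      have h2 := hys.2
      linarith
    have hdG : HasDerivAt G (D y) y := hG y hys
    have hbase : HasDerivAt (fun z : ℝ => 1 - z) (-1) y := by
      simpa using (hasDerivAt_id y).const_sub 1
    have hdP : HasDerivAt (fun z : ℝ => (1 - z) ^ v) (-1 * v * (1 - y) ^ (v - 1)) y :=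
      HasDerivAt.rpow_const hbase (Or.inl h1y.ne')
    have hmul := hdG.mul hdP
    have hzero : D y * (1 - y) ^ v + G y * (-1 * v * (1 - y) ^ (v - 1)) = 0 := by
      have hsplit : (1 - y) ^ v = (1 - y) ^ (v - 1) * (1 - y) := by
        rw [← Real.rpow_add_one h1y.ne' (v - 1)]
        ring_nf
      have hode := hODE y hys
      rw [hsplit]
      linear_combination (1 - y) ^ (v - 1) * hode
    rw [← hzero]
    exact hmul
  have hcont : ContinuousOn H (Set.Icc 0 t) := fun y hy =>
    ((hHderiv y hy).continuousAt).continuousWithinAt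
  have hconst := constant_of_has_deriv_right_zero hcont
    (fun y hy => (hHderiv y (Set.Ico_subset_Icc_self hy)).hasDerivWithinAt)
  have hHt : H t = H 0 := hconst t ⟨ht0, le_refl t⟩
  have hG0 : G 0 = 1 := by
    have h01 : (∑' r : ℕ, f r 0) = 1 := by
      rw [tsum_eq_single 0 (by intro r hr; simp [hf, zero_pow hr])]
      simp [hf]
    simpa [hGdef] using h01
  have hH0 : H 0 = 1 := by
    simp [hHdef, hG0, Real.one_rpow]
  have hts : t ∈ s := ⟨by linarith, htc⟩
  have hGt : G t = (1 - t) ^ (-v) := by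
    have h1t : (0:ℝ) < 1 - t := by linarith
    rw [Real.rpow_neg h1t.le]
    have hmul1 : G t * (1 - t) ^ v = 1 := by
      have h2 := hHt.trans hH0
      simpa [hHdef] using h2
    have hpow : ((1 - t):ℝ) ^ v ≠ 0 := (Real.rpow_pos_of_pos h1t v).ne'
    field_simp
    linarith [hmul1]
  have final := (hsumf t hts).hasSum
  have : pochTerm v t = fun r => f r t := by
    funext r; rfl
  rw [this, ← hGt]
  exact final

lemma asc_succ_left_eval (v : ℝ) (r : ℕ) :
    (ascPochhammer ℝ (r + 1)).eval v = v * (ascPochhammer ℝ r).eval (v + 1) := by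
  rw [ascPochhammer_succ_left]
  simp [eval_comp]

lemma hasSum_mul_pochTerm {v t : ℝ} (hv : 0 ≤ v) (ht0 : 0 ≤ t) (ht1 : t < 1) :
    HasSum (fun r : ℕ => (r : ℝ) * pochTerm v t r) (v * t * (1 - t) ^ (-(v + 1))) := by
  have h1 := (hasSum_pochTerm (v := v + 1) (by linarith) ht0 ht1).mul_left (v * t)
  have hterm : ∀ r : ℕ, v * t * pochTerm (v + 1) t r = ((r : ℝ) + 1) * pochTerm v t (r + 1) := by
    intro r
    unfold pochTerm
    rw [asc_succ_left_eval, Nat.factorial_succ, pow_succ]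
    have h1 : (r.factorial : ℝ) ≠ 0 := Nat.cast_ne_zero.mpr r.factorial_ne_zero
    push_cast
    field_simp
  rw [funext hterm] at h1
  have h2 : HasSum (fun r : ℕ => (fun m : ℕ => (m : ℝ) * pochTerm v t m) (r + 1))
      (v * t * (1 - t) ^ (-(v + 1))) := by
    simpa using h1
  have h3 := (hasSum_nat_add_iff (f := fun m : ℕ => (m : ℝ) * pochTerm v t m) 1).1 h2
  simpa using h3

lemma hasSum_inv_factorial : HasSum (fun m : ℕ => 1 / (m.factorial : ℝ)) (Real.exp 1) := by
  rw [Real.exp_eq_exp_ℝ]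
  simpa [one_div] using NormedSpace.expSeries_div_hasSum_exp (1 : ℝ)

lemma hasSum_mul_inv_factorial :
    HasSum (fun m : ℕ => (m : ℝ) * (1 / (m.factorial : ℝ))) (Real.exp 1) := by
  set g : ℕ → ℝ := fun k => (k : ℝ) * (1 / (k.factorial : ℝ)) with hg
  have hfun : (fun m : ℕ => g (m + 1)) = fun m : ℕ => 1 / (m.factorial : ℝ) := by
    funext m
    have hm : (m.factorial : ℝ) ≠ 0 := Nat.cast_ne_zero.mpr m.factorial_ne_zero
    simp only [hg, Nat.factorial_succ]
    push_cast
    field_simp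
  have h2 : HasSum (fun m : ℕ => g (m + 1)) (Real.exp 1) := by
    rw [hfun]; exact hasSum_inv_factorial
  have h3 := (hasSum_nat_add_iff (f := g) 1).1 h2
  simpa [hg] using h3

lemma charlier_eq (a u : ℝ) (k : ℕ) :
    charlier a u k / (k.factorial : ℝ) =
      ∑ kl ∈ Finset.HasAntidiagonal.antidiagonal k, pochTerm (-u) (1 / a) kl.1 * (1 / (kl.2.factorial : ℝ)) := by
  rw [Finset.Nat.sum_antidiagonal_eq_sum_range_succ_mk]
  unfold charlier pochTerm
  rw [Finset.sum_div]
  refine Finset.sum_congr rfl ?_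
  intro r hr
  have hrk : r ≤ k := Nat.lt_succ_iff.mp (Finset.mem_range.mp hr)
  rw [Nat.cast_choose ℝ hrk]
  have h1 : (r.factorial : ℝ) ≠ 0 := Nat.cast_ne_zero.mpr r.factorial_ne_zero
  have h2 : ((k - r).factorial : ℝ) ≠ 0 := Nat.cast_ne_zero.mpr (k - r).factorial_ne_zero
  have h3 : (k.factorial : ℝ) ≠ 0 := Nat.cast_ne_zero.mpr k.factorial_ne_zero
  field_simp

/-- First moment of the Kantorovich-Charlier operator. -/
theorem K_first_moment (a α β x : ℝ) (n : ℕ) (ha : 1 < a) (hn : 1 ≤ n)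
    (hα : 0 ≤ α) (hαβ : α ≤ β) (hx : 0 ≤ x) (hr : 0 ≤ rstar a α β x n) :
    K a α β n (fun t => t) x =
      (-(1 + 1 / (a - 1)) + Real.sqrt (radicand a α β x n)) / (2 * ((n : ℝ) + β)) := by
  have ha0 : (0:ℝ) < a := by linarith
  have ha1 : a - 1 ≠ 0 := sub_ne_zero.mpr ha.ne'
  have hn1 : (1:ℝ) ≤ (n:ℝ) := by exact_mod_cast hn
  have hβ : 0 ≤ β := le_trans hα hαβ
  have hnb : (0:ℝ) < (n:ℝ) + β := by linarith
  have hfid : K a α β n (fun t => t) x =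
      ((n : ℝ) + β) * Real.exp (-1) * (1 - 1 / a) ^ ((a - 1) * n * rstar a α β x n) *
        ∑' k : ℕ, charlier a (-(a - 1) * n * rstar a α β x n) k / (Nat.factorial k : ℝ) *
          ∫ s in ((k + α) / ((n : ℝ) + β))..((k + α + 1) / ((n : ℝ) + β)), s := rfl
  rw [hfid]
  set R := rstar a α β x n with hR
  set t : ℝ := 1 / a with htdef
  set v : ℝ := (a - 1) * (n : ℝ) * R with hvdef
  have ht0 : 0 < t := by rw [htdef]; positivity
  have ht1 : t < 1 := by rw [htdef, div_lt_one ha0]; linarith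
  have h1t : (0:ℝ) < 1 - t := by linarith
  have hv : 0 ≤ v := mul_nonneg (mul_nonneg (by linarith) (Nat.cast_nonneg n)) hr
  set A : ℕ → ℝ := fun r => pochTerm v t r with hA
  set B : ℕ → ℝ := fun m => 1 / (m.factorial : ℝ) with hB
  have hSA : HasSum A ((1 - t) ^ (-v)) := hasSum_pochTerm hv ht0.le ht1
  have hSB : HasSum B (Real.exp 1) := hasSum_inv_factorial
  have hSA2 : HasSum (fun r : ℕ => 2 * (r:ℝ) * A r) (2 * (v * t * (1 - t) ^ (-(v + 1)))) := by
    have h := (hasSum_mul_pochTerm hv ht0.le ht1).mul_left 2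
    simpa [hA, mul_assoc] using h
  have hSB2 : HasSum (fun m : ℕ => 2 * (m:ℝ) * B m) (2 * Real.exp 1) := by
    have h := hasSum_mul_inv_factorial.mul_left 2
    simpa [hB, mul_assoc] using h
  have hSA3 : HasSum (fun r : ℕ => (2 * α + 1) * A r) ((2 * α + 1) * ((1 - t) ^ (-v))) :=
    hSA.mul_left _
  have hAnn : ∀ r, 0 ≤ A r := fun r => pochTerm_nonneg hv ht0.le r
  have hBnn : ∀ m : ℕ, 0 ≤ B m := fun m => by positivity
  have hnaA : Summable (fun r => ‖A r‖) :=
    hSA.summable.congr fun r => (Real.norm_of_nonneg (hAnn r)).symm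
  have hnbB : Summable (fun m => ‖B m‖) :=
    hSB.summable.congr fun m => (Real.norm_of_nonneg (hBnn m)).symm
  have hna2 : Summable (fun r : ℕ => ‖2 * (r:ℝ) * A r‖) :=
    hSA2.summable.congr fun r =>
      (Real.norm_of_nonneg (mul_nonneg (by positivity) (hAnn r))).symm
  have hnb2 : Summable (fun m : ℕ => ‖2 * (m:ℝ) * B m‖) :=
    hSB2.summable.congr fun m =>
      (Real.norm_of_nonneg (mul_nonneg (by positivity) (hBnn m))).symm
  have hna3 : Summable (fun r : ℕ => ‖(2 * α + 1) * A r‖) :=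
    hSA3.summable.congr fun r =>
      (Real.norm_of_nonneg (mul_nonneg (by linarith) (hAnn r))).symm
  have hC1 := tsum_mul_tsum_eq_tsum_sum_antidiagonal_of_summable_norm hna2 hnbB
  have hC2 := tsum_mul_tsum_eq_tsum_sum_antidiagonal_of_summable_norm hnaA hnb2
  have hC3 := tsum_mul_tsum_eq_tsum_sum_antidiagonal_of_summable_norm hna3 hnbB
  have hs1 : Summable (fun k : ℕ =>
      ∑ kl ∈ Finset.HasAntidiagonal.antidiagonal k, 2 * (kl.1:ℝ) * A kl.1 * B kl.2) :=
    (summable_norm_sum_mul_antidiagonal_of_summable_norm hna2 hnbB).of_norm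
  have hs2 : Summable (fun k : ℕ =>
      ∑ kl ∈ Finset.HasAntidiagonal.antidiagonal k, A kl.1 * (2 * (kl.2:ℝ) * B kl.2)) :=
    (summable_norm_sum_mul_antidiagonal_of_summable_norm hnaA hnb2).of_norm
  have hs3 : Summable (fun k : ℕ =>
      ∑ kl ∈ Finset.HasAntidiagonal.antidiagonal k, (2 * α + 1) * A kl.1 * B kl.2) :=
    (summable_norm_sum_mul_antidiagonal_of_summable_norm hna3 hnbB).of_norm
  have step1 : ∀ k : ℕ, charlier a (-(a - 1) * n * R) k / (Nat.factorial k : ℝ) *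
      (∫ s in (((k:ℝ) + α) / ((n : ℝ) + β))..(((k:ℝ) + α + 1) / ((n : ℝ) + β)), s)
      = ((∑ kl ∈ Finset.HasAntidiagonal.antidiagonal k, 2 * (kl.1:ℝ) * A kl.1 * B kl.2)
        + (∑ kl ∈ Finset.HasAntidiagonal.antidiagonal k, A kl.1 * (2 * (kl.2:ℝ) * B kl.2))
        + (∑ kl ∈ Finset.HasAntidiagonal.antidiagonal k, (2 * α + 1) * A kl.1 * B kl.2))
          / (2 * ((n:ℝ) + β) ^ 2) := by
    intro k
    rw [integral_id]
    rw [charlier_eq]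
    rw [show -(-(a - 1) * (n:ℝ) * R) = v from by rw [hvdef]; ring]
    rw [show (1:ℝ) / a = t from htdef.symm]
    have hIk : ((((k:ℝ) + α + 1) / ((n:ℝ) + β)) ^ 2 - (((k:ℝ) + α) / ((n:ℝ) + β)) ^ 2) / 2
        = (2 * (k:ℝ) + 2 * α + 1) / (2 * ((n:ℝ) + β) ^ 2) := by
      field_simp
      ring
    rw [hIk]
    have key : (∑ kl ∈ Finset.HasAntidiagonal.antidiagonal k,
          pochTerm v t kl.1 * (1 / ((kl.2.factorial : ℕ) : ℝ))) * (2 * (k:ℝ) + 2 * α + 1)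
        = (∑ kl ∈ Finset.HasAntidiagonal.antidiagonal k, 2 * (kl.1:ℝ) * A kl.1 * B kl.2)
          + (∑ kl ∈ Finset.HasAntidiagonal.antidiagonal k, A kl.1 * (2 * (kl.2:ℝ) * B kl.2))
          + (∑ kl ∈ Finset.HasAntidiagonal.antidiagonal k, (2 * α + 1) * A kl.1 * B kl.2) := by
      rw [Finset.sum_mul, ← Finset.sum_add_distrib, ← Finset.sum_add_distrib]
      refine Finset.sum_congr rfl fun kl hkl => ?_
      have hk : kl.1 + kl.2 = k := Finset.HasAntidiagonal.mem_antidiagonal.mp hkl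
      have hk' : ((kl.1:ℝ) + (kl.2:ℝ)) = (k:ℝ) := by exact_mod_cast congrArg (Nat.cast : ℕ → ℝ) hk
      rw [hA, hB, ← hk']
      ring
    rw [← key]
    ring
  have htsum : (∑' k : ℕ, charlier a (-(a - 1) * n * R) k / (Nat.factorial k : ℝ) *
      ∫ s in (((k:ℝ) + α) / ((n : ℝ) + β))..(((k:ℝ) + α + 1) / ((n : ℝ) + β)), s)
      = ((2 * (v * t * (1 - t) ^ (-(v + 1)))) * Real.exp 1
          + ((1 - t) ^ (-v)) * (2 * Real.exp 1)
          + ((2 * α + 1) * ((1 - t) ^ (-v))) * Real.exp 1) / (2 * ((n:ℝ) + β) ^ 2) := by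
    rw [tsum_congr step1, tsum_div_const, Summable.tsum_add (hs1.add hs2) hs3, Summable.tsum_add hs1 hs2,
      ← hC1, ← hC2, ← hC3, hSA.tsum_eq, hSB.tsum_eq, hSA2.tsum_eq, hSB2.tsum_eq, hSA3.tsum_eq]
  rw [htsum]
  have hPQ : (1 - t) ^ v * (1 - t) ^ (-v) = 1 := by
    rw [← Real.rpow_add h1t]; simp
  have hPR : (1 - t) ^ v * (1 - t) ^ (-(v + 1)) = (1 - t)⁻¹ := by
    rw [← Real.rpow_add h1t, show v + -(v + 1) = -1 by ring, Real.rpow_neg h1t.le, Real.rpow_one]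
  have hE : Real.exp (-1) * Real.exp 1 = 1 := by
    rw [← Real.exp_add]; simp
  have expand : ((n:ℝ) + β) * Real.exp (-1) * ((1 - t) ^ v) *
      (((2 * (v * t * (1 - t) ^ (-(v + 1)))) * Real.exp 1
        + ((1 - t) ^ (-v)) * (2 * Real.exp 1)
        + ((2 * α + 1) * ((1 - t) ^ (-v))) * Real.exp 1) / (2 * ((n:ℝ) + β) ^ 2))
      = ((n:ℝ) + β) * ((Real.exp (-1) * Real.exp 1) *
          (2 * v * t * ((1 - t) ^ v * (1 - t) ^ (-(v + 1)))
            + (3 + 2 * α) * ((1 - t) ^ v * (1 - t) ^ (-v)))) / (2 * ((n:ℝ) + β) ^ 2) := by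
    ring
  rw [expand, hE, hPQ, hPR]
  have hvt : 2 * v * t * (1 - t)⁻¹ = 2 * ((n:ℝ) * R) := by
    rw [hvdef, htdef]
    have hita : (1:ℝ) - 1 / a = (a - 1) / a := by field_simp
    rw [hita]
    field_simp
  rw [hvt]
  have h2nr : 2 * ((n:ℝ) * R) = -(4 + 2 * α + 1 / (a - 1)) + Real.sqrt (radicand a α β x n) := by
    rw [hR]
    unfold rstar
    have hn0 : (n:ℝ) ≠ 0 := by linarith
    field_simp
  rw [h2nr]
  field_simp
  ring
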